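/- arXiv:1407.4754 — 5 statements merged into one kernel-verified Lean document; each statement's English description precedes it below -/
import Mathlib

section
/- Let H and K be 2-dimensional Hilbert spaces, x = (1/√2)(e₁⊗f₁ + e₂⊗f₂) with {e₁,e₂}, {f₁,f₂} orthonormal bases, and ω_x the corresponding vector state on B(H⊗K). Then for every state ρ in the norm closure of the convex hull of product states (states of the form φ⊗ψ), one has ‖ω_x − ρ‖ ≥ 1/4. -/
open scoped Kronecker ComplexOrder

/-- A state on `B(EuclideanSpace ℂ ι)`: a positive linear functional `σ` with
`σ(𝟙) = 1` (hence of norm 1). -/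
def IsState {ι : Type*} [Fintype ι] [DecidableEq ι]
    (σ : (EuclideanSpace ℂ ι →L[ℂ] EuclideanSpace ℂ ι) →L[ℂ] ℂ) : Prop :=
  σ 1 = 1 ∧ ∀ T : EuclideanSpace ℂ ι →L[ℂ] EuclideanSpace ℂ ι,
    T.IsPositive → 0 ≤ σ T

/-- The vector state `ω_x(T) = ⟨x, T x⟩` on `B(EuclideanSpace ℂ ι)`. -/
noncomputable def vectorState {ι : Type*} [Fintype ι] [DecidableEq ι]
    (x : EuclideanSpace ℂ ι) :
    (EuclideanSpace ℂ ι →L[ℂ] EuclideanSpace ℂ ι) →L[ℂ] ℂ :=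
  LinearMap.toContinuousLinearMap
    { toFun := fun T => (inner ℂ x (T x) : ℂ)
      map_add' := fun T S => by
        simp [ContinuousLinearMap.add_apply, inner_add_right]
      map_smul' := fun c T => by
        simp [ContinuousLinearMap.smul_apply, inner_smul_right] }

/-- A product state on `B(H ⊗ K)` (with `H ⊗ K` modeled as
`EuclideanSpace ℂ (Fin 2 × Fin 2)`): a functional of the form `φ ⊗ ψ`,
i.e. `ρ(A ⊗ B) = φ(A)ψ(B)` for states `φ` on `B(H)`, `ψ` on `B(K)`. -/
def IsProductState
    (ρ : (EuclideanSpace ℂ (Fin 2 × Fin 2) →L[ℂ] EuclideanSpace ℂ (Fin 2 × Fin 2))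
      →L[ℂ] ℂ) : Prop :=
  ∃ φ ψ : (EuclideanSpace ℂ (Fin 2) →L[ℂ] EuclideanSpace ℂ (Fin 2)) →L[ℂ] ℂ,
    IsState φ ∧ IsState ψ ∧
    ∀ A B : Matrix (Fin 2) (Fin 2) ℂ,
      ρ (Matrix.toEuclideanCLM (𝕜 := ℂ) (A ⊗ₖ B)) =
        φ (Matrix.toEuclideanCLM (𝕜 := ℂ) A) * ψ (Matrix.toEuclideanCLM (𝕜 := ℂ) B)


open Matrix
noncomputable section
namespace KRaux

lemma isPositive_of_posSemidef {n : Type*} [Fintype n] [DecidableEq n]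
    {A : Matrix n n ℂ} (hA : A.PosSemidef) :
    (Matrix.toEuclideanCLM (𝕜 := ℂ) A).IsPositive := by
  rw [ContinuousLinearMap.isPositive_def']
  constructor
  · rw [_root_.IsSelfAdjoint, ← map_star]; congr 1; exact hA.1
  · intro x
    have h := hA.dotProduct_mulVec_nonneg (WithLp.equiv _ _ x)
    rw [ContinuousLinearMap.reApplyInnerSelf]
    have : (inner ℂ (Matrix.toEuclideanCLM (𝕜 := ℂ) A x) x : ℂ) =
        star (dotProduct (star (WithLp.equiv _ _ x)) (A *ᵥ (WithLp.equiv _ _ x))) := by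
      rw [EuclideanSpace.inner_eq_star_dotProduct]
      rw [star_dotProduct]
      simp [Matrix.ofLp_toEuclideanCLM, dotProduct_comm, Matrix.toLin'_apply]
    rw [this]
    rw [Complex.nonneg_iff] at h
    simpa using h.1

lemma posSemidef_vecMulVec {n : Type*} [Fintype n] (v : n → ℂ) :
    (vecMulVec v (star v)).PosSemidef := by
  refine Matrix.PosSemidef.of_dotProduct_mulVec_nonneg ?_ ?_
  · ext i j; simp [vecMulVec, conjTranspose_apply, mul_comm]
  · intro x
    have h1 : (vecMulVec v (star v)) *ᵥ x = fun i => v i * (star v ⬝ᵥ x) := by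
      funext i
      simp [mulVec, vecMulVec, dotProduct, Finset.mul_sum, mul_assoc]
    have h2 : star x ⬝ᵥ (fun i => v i * (star v ⬝ᵥ x)) =
        star (star v ⬝ᵥ x) * (star v ⬝ᵥ x) := by
      simp [dotProduct, Finset.sum_mul, star_sum]
      congr 1
      funext i
      ring
    rw [h1, h2]
    exact star_mul_self_nonneg _

variable (σ : (EuclideanSpace ℂ (Fin 2) →L[ℂ] EuclideanSpace ℂ (Fin 2)) →L[ℂ] ℂ)

/-- matrix entries of a functional -/
def ent (i j : Fin 2) : ℂ := σ (Matrix.toEuclideanCLM (𝕜 := ℂ) (Matrix.single i j (1:ℂ)))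

lemma eval_expand (A : Matrix (Fin 2) (Fin 2) ℂ) :
    σ (Matrix.toEuclideanCLM (𝕜 := ℂ) A) = ∑ i, ∑ j, A i j * ent σ i j := by
  conv_lhs => rw [matrix_eq_sum_single A]
  rw [map_sum, map_sum]
  congr 1; funext i
  rw [map_sum, map_sum]
  congr 1; funext j
  have : Matrix.single i j (A i j) = A i j • Matrix.single i j (1:ℂ) := by
    rw [smul_single, smul_eq_mul, mul_one]
  rw [this, _root_.map_smul, _root_.map_smul, smul_eq_mul, ent]

lemma eval_vecMulVec (v : Fin 2 → ℂ) :
    σ (Matrix.toEuclideanCLM (𝕜 := ℂ) (vecMulVec v (star v))) =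
      ∑ i, ∑ j, v i * star (v j) * ent σ i j := by
  rw [eval_expand]
  exact Finset.sum_congr rfl fun i _ => Finset.sum_congr rfl fun j _ => by
    simp [vecMulVec]

variable (hσ : IsState σ)
include hσ

lemma ent_nonneg (v : Fin 2 → ℂ) :
    0 ≤ ∑ i, ∑ j, v i * star (v j) * ent σ i j := by
  rw [← eval_vecMulVec]
  exact hσ.2 _ (isPositive_of_posSemidef (posSemidef_vecMulVec v))

lemma ent_diag_nonneg (i : Fin 2) : 0 ≤ ent σ i i := by
  have h := ent_nonneg σ hσ (Pi.single i 1)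
  simpa [Fin.sum_univ_two, Pi.single_apply] using h

lemma ent_trace : ent σ 0 0 + ent σ 1 1 = 1 := by
  have h1 : (Matrix.single 0 0 (1:ℂ) + Matrix.single 1 1 1 : Matrix (Fin 2) (Fin 2) ℂ) = 1 := by
    ext i j
    fin_cases i <;> fin_cases j <;> simp [Matrix.single, one_apply]
  calc ent σ 0 0 + ent σ 1 1
      = σ (Matrix.toEuclideanCLM (𝕜 := ℂ) (Matrix.single 0 0 1 + Matrix.single 1 1 1)) := by
        rw [map_add, map_add]
        try rfl
    _ = 1 := by rw [h1, _root_.map_one]; exact hσ.1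

lemma ent_conj : ent σ 1 0 = star (ent σ 0 1) := by
  have h1 := (Complex.nonneg_iff.mp (ent_nonneg σ hσ ![1,1])).2
  have h2 := (Complex.nonneg_iff.mp (ent_nonneg σ hσ ![1,Complex.I])).2
  have hd0 := (Complex.nonneg_iff.mp (ent_diag_nonneg σ hσ 0)).2
  have hd1 := (Complex.nonneg_iff.mp (ent_diag_nonneg σ hσ 1)).2
  simp only [Fin.sum_univ_two, Matrix.cons_val_zero, Matrix.cons_val_one, Matrix.head_cons,
    one_mul, mul_one, star_one, Complex.star_def, Complex.conj_I, Complex.add_im,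
    Complex.mul_im, Complex.mul_re, Complex.one_re, Complex.one_im, Complex.neg_re,
    Complex.neg_im, Complex.I_re, Complex.I_im, _root_.map_one] at h1 h2
  apply Complex.ext <;>
    simp only [Complex.star_def, Complex.conj_re, Complex.conj_im] <;>
    linarith [h1, h2, hd0, hd1]

lemma ent_quad (r : ℝ) :
    0 ≤ (ent σ 1 1).re * (r * r) + (-(2 * ‖ent σ 0 1‖ ^ 2)) * r
      + ‖ent σ 0 1‖ ^ 2 * (ent σ 0 0).re := by
  have h := (Complex.nonneg_iff.mp
    (ent_nonneg σ hσ ![star (ent σ 0 1), ((-r : ℝ) : ℂ)])).1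
  have hc := ent_conj σ hσ
  have habs2 : ‖ent σ 0 1‖ ^ 2 = (ent σ 0 1).re^2 + (ent σ 0 1).im^2 := by
    rw [Complex.sq_norm, Complex.normSq_apply]; ring
  rw [habs2]
  simp only [Fin.sum_univ_two, Matrix.cons_val_zero, Matrix.cons_val_one,
    Matrix.head_cons] at h
  rw [hc] at h
  simp only [star_star, Complex.star_def, Complex.add_re, Complex.mul_re, Complex.mul_im,
    Complex.conj_re, Complex.conj_im, Complex.ofReal_re, Complex.ofReal_im,
    Complex.conj_ofReal, Complex.neg_re, Complex.neg_im] at h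
  nlinarith [h]

lemma ent_cs : ‖ent σ 0 1‖ ^ 2 ≤ (ent σ 0 0).re * (ent σ 1 1).re := by
  have hd := discrim_le_zero (ent_quad σ hσ)
  rw [discrim] at hd
  have hd0 := (Complex.nonneg_iff.mp (ent_diag_nonneg σ hσ 0)).1
  have hd1 := (Complex.nonneg_iff.mp (ent_diag_nonneg σ hσ 1)).1
  rcases eq_or_lt_of_le (sq_nonneg (‖ent σ 0 1‖)) with h0 | h0
  · rw [← h0]; positivity
  · nlinarith [hd, h0]

omit hσ

lemma prod_bound (φ ψ : (EuclideanSpace ℂ (Fin 2) →L[ℂ] EuclideanSpace ℂ (Fin 2)) →L[ℂ] ℂ)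
    (hφ : IsState φ) (hψ : IsState ψ) :
    (∑ i, ∑ j, ent φ i j * ent ψ i j).re ≤ 1 := by
  have hcφ := ent_conj φ hφ
  have hcψ := ent_conj ψ hψ
  have hd0φ := Complex.nonneg_iff.mp (ent_diag_nonneg φ hφ 0)
  have hd1φ := Complex.nonneg_iff.mp (ent_diag_nonneg φ hφ 1)
  have hd0ψ := Complex.nonneg_iff.mp (ent_diag_nonneg ψ hψ 0)
  have hd1ψ := Complex.nonneg_iff.mp (ent_diag_nonneg ψ hψ 1)
  have htφ : (ent φ 0 0).re + (ent φ 1 1).re = 1 := by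
    rw [← Complex.add_re, ent_trace φ hφ, Complex.one_re]
  have htψ : (ent ψ 0 0).re + (ent ψ 1 1).re = 1 := by
    rw [← Complex.add_re, ent_trace ψ hψ, Complex.one_re]
  have habsφ : (ent φ 0 1).re^2 + (ent φ 0 1).im^2 ≤ (ent φ 0 0).re * (ent φ 1 1).re := by
    have h := ent_cs φ hφ
    rw [Complex.sq_norm, Complex.normSq_apply] at h
    nlinarith [h]
  have habsψ : (ent ψ 0 1).re^2 + (ent ψ 0 1).im^2 ≤ (ent ψ 0 0).re * (ent ψ 1 1).re := by
    have h := ent_cs ψ hψ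
    rw [Complex.sq_norm, Complex.normSq_apply] at h
    nlinarith [h]
  simp only [Fin.sum_univ_two, hcφ, hcψ, Complex.add_re, Complex.mul_re,
    Complex.star_def, Complex.conj_re, Complex.conj_im]
  set p := (ent φ 0 0).re
  set p' := (ent φ 1 1).re
  set q := (ent ψ 0 0).re
  set q' := (ent ψ 1 1).re
  set zr := (ent φ 0 1).re
  set zi := (ent φ 0 1).im
  set wr := (ent ψ 0 1).re
  set wi := (ent ψ 0 1).im
  have hu : (zr*wr - zi*wi)^2 ≤ (p*p')*(q*q') := by
    nlinarith [sq_nonneg (zr*wi + zi*wr), habsφ, habsψ, sq_nonneg zr, sq_nonneg zi,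
      sq_nonneg wr, sq_nonneg wi,
      mul_le_mul habsφ habsψ (by positivity) (by nlinarith [habsφ, sq_nonneg zr, sq_nonneg zi])]
  have hS : 0 ≤ p*q' + p'*q :=
    add_nonneg (mul_nonneg hd0φ.1 hd1ψ.1) (mul_nonneg hd1φ.1 hd0ψ.1)
  have h2 : 2*(zr*wr - zi*wi) ≤ p*q' + p'*q := by
    nlinarith [hu, sq_nonneg (p*q' - p'*q), hS, sq_nonneg (p*q' + p'*q - 2*(zr*wr - zi*wi))]
  nlinarith [h2, htφ, htψ, hd0φ.2, hd1φ.2, hd0ψ.2, hd1ψ.2]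

def yvec : EuclideanSpace ℂ (Fin 2 × Fin 2) :=
  EuclideanSpace.single ((0 : Fin 2), (0 : Fin 2)) (1 : ℂ) +
    EuclideanSpace.single ((1 : Fin 2), (1 : Fin 2)) (1 : ℂ)

def xvec : EuclideanSpace ℂ (Fin 2 × Fin 2) := ((Real.sqrt 2 : ℂ))⁻¹ • yvec

def Mmat : Matrix (Fin 2 × Fin 2) (Fin 2 × Fin 2) ℂ :=
  (2:ℂ)⁻¹ • ∑ i : Fin 2, ∑ j : Fin 2,
    Matrix.single i j (1:ℂ) ⊗ₖ Matrix.single i j (1:ℂ)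

def Pop : EuclideanSpace ℂ (Fin 2 × Fin 2) →L[ℂ] EuclideanSpace ℂ (Fin 2 × Fin 2) :=
  Matrix.toEuclideanCLM (𝕜 := ℂ) Mmat

lemma csq : ((Real.sqrt 2 : ℂ))⁻¹ * ((Real.sqrt 2 : ℂ))⁻¹ = (2:ℂ)⁻¹ := by
  have h : ((Real.sqrt 2 : ℂ)) * ((Real.sqrt 2 : ℂ)) = (2:ℂ) := by
    norm_cast
    exact Real.mul_self_sqrt (by norm_num)
  rw [← mul_inv, h]

lemma inner_xvec (v : EuclideanSpace ℂ (Fin 2 × Fin 2)) :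
    (inner ℂ xvec v : ℂ) = ((Real.sqrt 2 : ℂ))⁻¹ * (v (0,0) + v (1,1)) := by
  simp [xvec, yvec, inner_smul_left, inner_add_left, EuclideanSpace.inner_single_left,
    Complex.conj_ofReal, map_inv₀, mul_add]
  ring

lemma Pop_apply (v : EuclideanSpace ℂ (Fin 2 × Fin 2)) :
    Pop v = (inner ℂ xvec v : ℂ) • xvec := by
  apply (WithLp.equiv 2 _).injective
  funext idx
  obtain ⟨a, b⟩ := idx
  have hL : (WithLp.equiv 2 _) (Pop v) = Mmat *ᵥ (WithLp.equiv 2 _ v) := by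
    rw [Pop]; exact Matrix.ofLp_toEuclideanCLM _ _
  rw [hL]
  rw [inner_xvec]
  show (Mmat *ᵥ (WithLp.equiv 2 _ v)) (a, b) =
    ((((Real.sqrt 2 : ℂ))⁻¹ * (v (0,0) + v (1,1))) • xvec) (a, b)
  have hx : ∀ p : Fin 2 × Fin 2, xvec p = ((Real.sqrt 2 : ℂ))⁻¹ * yvec p := fun p => rfl
  fin_cases a <;> fin_cases b <;>
    simp [Mmat, mulVec, dotProduct, Fintype.sum_prod_type, Fin.sum_univ_two,
      Matrix.smul_apply, Matrix.sum_apply, Matrix.kroneckerMap_apply, Matrix.single,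
      hx, yvec, EuclideanSpace.single_apply, xvec, smul_eq_mul] <;>
    ring_nf <;>
    simp [show ((Real.sqrt 2 : ℂ))⁻¹ ^ 2 = 1/2 from by rw [sq, csq]; norm_num]

lemma inner_xvec_self : (inner ℂ xvec xvec : ℂ) = 1 := by
  rw [inner_xvec]
  have h0 : xvec ((0 : Fin 2), (0 : Fin 2)) = ((Real.sqrt 2 : ℂ))⁻¹ := by
    simp [xvec, yvec, EuclideanSpace.single_apply]
  have h1 : xvec ((1 : Fin 2), (1 : Fin 2)) = ((Real.sqrt 2 : ℂ))⁻¹ := by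
    simp [xvec, yvec, EuclideanSpace.single_apply]
  rw [h0, h1]
  linear_combination (2:ℂ) * csq

lemma norm_xvec : ‖xvec‖ = 1 := by
  have h := @inner_self_eq_norm_sq ℂ _ _ _ _ xvec
  rw [inner_xvec_self] at h
  simp at h
  nlinarith [norm_nonneg xvec]

lemma Pop_xvec : Pop xvec = xvec := by
  rw [Pop_apply, inner_xvec_self, one_smul]

lemma norm_Pop : ‖Pop‖ ≤ 1 := by
  apply ContinuousLinearMap.opNorm_le_bound _ zero_le_one
  intro v
  rw [Pop_apply, norm_smul, norm_xvec, mul_one, one_mul]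
  calc ‖(inner ℂ xvec v : ℂ)‖ ≤ ‖xvec‖ * ‖v‖ := norm_inner_le_norm _ _
    _ = ‖v‖ := by rw [norm_xvec, one_mul]

lemma vectorState_Pop : vectorState xvec Pop = 1 := by
  show (inner ℂ xvec (Pop xvec) : ℂ) = 1
  rw [Pop_xvec, inner_xvec_self]

lemma prodstate_Pop (ρ : (EuclideanSpace ℂ (Fin 2 × Fin 2) →L[ℂ] EuclideanSpace ℂ (Fin 2 × Fin 2))
      →L[ℂ] ℂ) (h : IsProductState ρ) : (ρ Pop).re ≤ 1/2 := by
  obtain ⟨φ, ψ, hφ, hψ, hprod⟩ := h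
  have hval : ρ Pop = (2:ℂ)⁻¹ * ∑ i, ∑ j, ent φ i j * ent ψ i j := by
    rw [Pop, Mmat]
    rw [_root_.map_smul, _root_.map_smul, smul_eq_mul]
    simp only [map_sum]
    congr 1
    refine Finset.sum_congr rfl fun i _ => Finset.sum_congr rfl fun j _ => ?_
    exact hprod _ _
  rw [hval, show ((2:ℂ))⁻¹ = (((1:ℝ)/2 : ℝ) : ℂ) by norm_num, Complex.re_ofReal_mul]
  have := prod_bound φ ψ hφ hψ
  linarith

lemma mem_closure_le (ρ : (EuclideanSpace ℂ (Fin 2 × Fin 2) →L[ℂ] EuclideanSpace ℂ (Fin 2 × Fin 2))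
      →L[ℂ] ℂ) (hmem : ρ ∈ closure (convexHull ℝ {σ | IsProductState σ})) :
    (ρ Pop).re ≤ 1/2 := by
  set C : Set ((EuclideanSpace ℂ (Fin 2 × Fin 2) →L[ℂ] EuclideanSpace ℂ (Fin 2 × Fin 2)) →L[ℂ] ℂ) :=
    {σ | (σ Pop).re ≤ 1/2} with hC
  have hcont : Continuous fun σ : (EuclideanSpace ℂ (Fin 2 × Fin 2) →L[ℂ]
      EuclideanSpace ℂ (Fin 2 × Fin 2)) →L[ℂ] ℂ => (σ Pop).re :=
    Complex.continuous_re.comp (ContinuousLinearMap.apply ℂ ℂ Pop).continuous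
  have hclosed : IsClosed C := by
    have : C = (fun σ : (EuclideanSpace ℂ (Fin 2 × Fin 2) →L[ℂ]
        EuclideanSpace ℂ (Fin 2 × Fin 2)) →L[ℂ] ℂ => (σ Pop).re) ⁻¹' Set.Iic (1/2) := rfl
    rw [this]
    exact IsClosed.preimage hcont isClosed_Iic
  have hconvex : Convex ℝ C := by
    intro σ hσ τ hτ a b ha hb hab
    simp only [hC, Set.mem_setOf_eq, ContinuousLinearMap.add_apply,
      ContinuousLinearMap.smul_apply, Complex.add_re, Complex.smul_re, smul_eq_mul] at hσ hτ ⊢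
    nlinarith [mul_le_mul_of_nonneg_left hσ ha, mul_le_mul_of_nonneg_left hτ hb]
  exact closure_minimal (convexHull_min (fun σ hσ => prodstate_Pop σ hσ) hconvex) hclosed hmem

end KRaux
end

/-- Kadison–Ringrose: for the maximally entangled vector
`x = (1/√2)(e₁⊗f₁ + e₂⊗f₂)` in the tensor product of two 2-dimensional Hilbert
spaces, every state `ρ` in the norm closure of the convex hull of the product
states satisfies `‖ω_x − ρ‖ ≥ 1/4`. -/
theorem vector_state_far_from_separable_states :
    let x : EuclideanSpace ℂ (Fin 2 × Fin 2) :=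
      ((Real.sqrt 2 : ℂ))⁻¹ •
        (EuclideanSpace.single ((0 : Fin 2), (0 : Fin 2)) (1 : ℂ) +
          EuclideanSpace.single ((1 : Fin 2), (1 : Fin 2)) (1 : ℂ))
    ∀ ρ : (EuclideanSpace ℂ (Fin 2 × Fin 2) →L[ℂ] EuclideanSpace ℂ (Fin 2 × Fin 2))
        →L[ℂ] ℂ,
      IsState ρ →
      ρ ∈ closure (convexHull ℝ {σ | IsProductState σ}) →
      (1 : ℝ) / 4 ≤ ‖vectorState x - ρ‖ := by
  intro x ρ _hρ hmem
  have hx : x = KRaux.xvec := rfl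
  rw [hx]
  have hle := KRaux.mem_closure_le ρ hmem
  have h1 : (vectorState KRaux.xvec - ρ) KRaux.Pop = 1 - ρ KRaux.Pop := by
    rw [ContinuousLinearMap.sub_apply, KRaux.vectorState_Pop]
  have h2 : (1:ℝ)/2 ≤ ((vectorState KRaux.xvec - ρ) KRaux.Pop).re := by
    rw [h1, Complex.sub_re, Complex.one_re]
    linarith
  have h3 : ((vectorState KRaux.xvec - ρ) KRaux.Pop).re ≤ ‖vectorState KRaux.xvec - ρ‖ := by
    calc ((vectorState KRaux.xvec - ρ) KRaux.Pop).re
        ≤ ‖(vectorState KRaux.xvec - ρ) KRaux.Pop‖ := Complex.re_le_norm _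
      _ ≤ ‖vectorState KRaux.xvec - ρ‖ * ‖KRaux.Pop‖ :=
          ContinuousLinearMap.le_opNorm _ _
      _ ≤ ‖vectorState KRaux.xvec - ρ‖ * 1 :=
          mul_le_mul_of_nonneg_left KRaux.norm_Pop (norm_nonneg (vectorState KRaux.xvec - ρ))
      _ = ‖vectorState KRaux.xvec - ρ‖ := mul_one _
  linarith
end

section
/- For a compact convex subset K of a locally convex Hausdorff topological vector space and any probability Radon measure μ on K, there exists a unique point b(μ) ∈ K (the barycenter) such that f(b(μ)) = ∫_K f dμ for all continuous affine real-valued functions f on K. -/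
open MeasureTheory

/-- A continuous function on a compact space with a finite measure is integrable. -/
lemma integrable_of_continuous_compactSpace
    {X F : Type*} [TopologicalSpace X] [CompactSpace X] [MeasurableSpace X]
    [OpensMeasurableSpace X] [NormedAddCommGroup F] [SecondCountableTopology F]
    (μ : Measure X) [IsFiniteMeasure μ] {g : X → F} (hg : Continuous g) :
    Integrable g μ := by
  rcases isEmpty_or_nonempty X with h | h
  · exact Integrable.of_finite
  obtain ⟨C, hC⟩ := (isCompact_range (hg.norm)).bddAbove
  refine ⟨hg.aestronglyMeasurable, ?_⟩
  exact MeasureTheory.HasFiniteIntegral.of_bounded (C := C)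
    (Filter.Eventually.of_forall fun x => hC ⟨x, rfl⟩)

/-- For a compact convex subset `K` of a locally convex Hausdorff real
topological vector space and any Radon probability measure `μ` on `K`,
there is a unique point `b(μ) ∈ K` (the barycenter) with
`f (b(μ)) = ∫ f dμ` for every continuous affine real-valued function `f`. -/
theorem exists_unique_barycenter
    {E : Type*} [AddCommGroup E] [Module ℝ E] [TopologicalSpace E]
    [IsTopologicalAddGroup E] [ContinuousSMul ℝ E] [LocallyConvexSpace ℝ E]
    [T2Space E] [MeasurableSpace E] [BorelSpace E]
    (K : Set E) (hK : IsCompact K) (hKc : Convex ℝ K)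
    (μ : Measure K) [IsProbabilityMeasure μ] [μ.Regular] :
    ∃! b : E, b ∈ K ∧
      ∀ f : E →ᵃ[ℝ] ℝ, Continuous f → f b = ∫ x : K, f (x : E) ∂μ := by
  have : CompactSpace K := isCompact_iff_compactSpace.mp hK
  -- integrability of continuous functions on K
  -- key step: a point where all continuous linear functionals agree with their integrals
  have key : ∃ b ∈ K, ∀ ℓ : E →L[ℝ] ℝ, ℓ b = ∫ x : K, ℓ (x : E) ∂μ := by
    have := hK.inter_iInter_nonempty
      (fun ℓ : E →L[ℝ] ℝ => {x : E | ℓ x = ∫ x : K, ℓ (x : E) ∂μ})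
      (fun ℓ => isClosed_eq ℓ.continuous continuous_const) ?_
    · obtain ⟨b, hbK, hb⟩ := this
      simp only [Set.mem_iInter, Set.mem_setOf_eq] at hb
      exact ⟨b, hbK, hb⟩
    · intro u
      classical
      set T : E →L[ℝ] (u → ℝ) := ContinuousLinearMap.pi (fun i => (i : E →L[ℝ] ℝ)) with hT
      set c : u → ℝ := fun i => ∫ x : K, (i : E →L[ℝ] ℝ) (x : E) ∂μ with hc
      have hgc : Continuous fun x : K => T (x : E) := T.continuous.comp continuous_subtype_val
      have hgi : Integrable (fun x : K => T (x : E)) μ := integrable_of_continuous_compactSpace μ hgc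
      have hmem : c ∈ T '' K := by
        by_contra hcm
        obtain ⟨f, u0, hfc, hfK⟩ := geometric_hahn_banach_point_closed
          (hKc.linear_image T.toLinearMap) ((hK.image T.continuous).isClosed) hcm
        have hc_int : c = ∫ x : K, T (x : E) ∂μ := by
          funext i
          have := (ContinuousLinearMap.proj (R := ℝ) (φ := fun _ : u => ℝ) i).integral_comp_comm
            (φ := fun x : K => T (x : E)) hgi
          simpa [hc, hT] using this
        have hfc' : f c = ∫ x : K, f (T (x : E)) ∂μ := by
          rw [hc_int, f.integral_comp_comm hgi]
        have hlow : u0 ≤ ∫ x : K, f (T (x : E)) ∂μ := by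
          have : (∫ _ : K, u0 ∂μ) ≤ ∫ x : K, f (T (x : E)) ∂μ := by
            refine integral_mono (integrable_const _)
              (integrable_of_continuous_compactSpace μ (f.continuous.comp hgc)) fun x => ?_
            exact le_of_lt (hfK _ ⟨x, x.2, rfl⟩)
          simpa using this
        rw [hfc'] at hfc
        exact absurd hfc (not_lt.mpr hlow)
      obtain ⟨b, hbK, hTb⟩ := hmem
      refine ⟨b, hbK, ?_⟩
      simp only [Set.mem_iInter, Set.mem_setOf_eq]
      intro ℓ hℓ
      have := congrFun hTb ⟨ℓ, hℓ⟩
      simpa [hT, hc] using this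
  obtain ⟨b, hbK, hb⟩ := key
  have haff : ∀ f : E →ᵃ[ℝ] ℝ, Continuous f → f b = ∫ x : K, f (x : E) ∂μ := by
    intro f hf
    have hlin : Continuous f.linear := by
      rw [f.decomp'] ; exact hf.sub continuous_const
    set ℓ : E →L[ℝ] ℝ := ⟨f.linear, hlin⟩ with hℓ
    have hdec : ∀ x : E, f x = ℓ x + f 0 := by
      intro x
      conv_lhs => rw [f.decomp]
      rfl
    have h1 : Continuous fun x : K => ℓ (x : E) := ℓ.continuous.comp continuous_subtype_val
    rw [hdec b, hb ℓ]
    rw [show (fun x : K => f (x : E)) = fun x : K => ℓ (x : E) + f 0 from funext fun x => hdec x]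
    rw [integral_add (integrable_of_continuous_compactSpace μ h1) (integrable_const _)]
    simp
  refine ⟨b, ⟨hbK, haff⟩, ?_⟩
  rintro b' ⟨hb'K, hb'⟩
  by_contra hne
  obtain ⟨ℓ, hℓ⟩ := SeparatingDual.exists_separating_of_ne (R := ℝ) hne
  have h1 := hb' ℓ.toLinearMap.toAffineMap (by simpa using ℓ.continuous)
  have h2 := haff ℓ.toLinearMap.toAffineMap (by simpa using ℓ.continuous)
  rw [← h2] at h1
  have h3 : ℓ b' = ℓ b := by simpa using h1
  exact hℓ h3
end

section
/- A point ω of a compact convex set K is an extreme point if and only if the Dirac measure δ_ω is the only probability (Radon) measure on K with barycenter ω. -/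
open MeasureTheory

open Set
open scoped ENNReal

set_option linter.unusedSectionVars false

section helpers
variable {α : Type*} [MeasurableSpace α] [TopologicalSpace α]


lemma dirac_regular [T1Space α] [OpensMeasurableSpace α] (a : α) :
    (Measure.dirac a).Regular where
  toIsFiniteMeasureOnCompacts := inferInstance
  toOuterRegular := by
    constructor
    intro A hA r hr
    by_cases h : a ∈ A
    · refine ⟨univ, subset_univ A, isOpen_univ, ?_⟩
      simpa [Measure.dirac_apply_of_mem h] using hr
    · refine ⟨{a}ᶜ, subset_compl_singleton_iff.mpr h, isClosed_singleton.isOpen_compl, ?_⟩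
      have : Measure.dirac a {a}ᶜ = 0 := by
        rw [Measure.dirac_apply' _ isClosed_singleton.measurableSet.compl]
        simp
      rw [this]
      exact lt_of_le_of_lt zero_le hr
  innerRegular := by
    intro U hU r hr
    by_cases h : a ∈ U
    · refine ⟨{a}, singleton_subset_iff.2 h, isCompact_singleton, ?_⟩
      calc r < Measure.dirac a U := hr
        _ ≤ 1 := by
            simpa using measure_mono (subset_univ U) (μ := Measure.dirac a)
        _ = Measure.dirac a {a} := by rw [Measure.dirac_apply_of_mem (mem_singleton a)]
    · exfalso
      have : Measure.dirac a U = 0 := by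
        rw [Measure.dirac_apply' _ hU.measurableSet]; simp [h]
      rw [this] at hr; exact (not_lt_of_ge (show (0:ℝ≥0∞) ≤ r from zero_le)) hr

lemma regular_add {μ ν : Measure α} [IsFiniteMeasure μ] [IsFiniteMeasure ν]
    (hμ : μ.Regular) (hν : ν.Regular) : (μ + ν).Regular := by
  haveI := hμ; haveI := hν
  refine { toIsFiniteMeasureOnCompacts := inferInstance, toOuterRegular := ?_,
           innerRegular := ?_ }
  · constructor
    intro A hA r hr
    rcases eq_or_ne r ∞ with rfl | hrt
    · exact ⟨univ, subset_univ _, isOpen_univ, measure_lt_top _ _⟩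
    set s := μ A + ν A with hs
    have hsr : s < r := hr
    set ε := (r - s) / 2 with hε
    have hε0 : ε ≠ 0 := by
      have : 0 < r - s := tsub_pos_iff_lt.2 hsr
      simp [hε, ENNReal.div_eq_zero_iff, this.ne', hrt]
    obtain ⟨U, hAU, hUo, hU⟩ := Set.exists_isOpen_lt_add A (measure_ne_top μ A) hε0
    obtain ⟨V, hAV, hVo, hV⟩ := Set.exists_isOpen_lt_add A (μ := ν) (measure_ne_top ν A) hε0
    refine ⟨U ∩ V, subset_inter hAU hAV, hUo.inter hVo, ?_⟩
    calc (μ + ν) (U ∩ V) = μ (U ∩ V) + ν (U ∩ V) := rfl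
      _ ≤ μ U + ν V :=
          add_le_add (measure_mono inter_subset_left) (measure_mono inter_subset_right)
      _ < (μ A + ε) + (ν A + ε) := ENNReal.add_lt_add hU hV
      _ = s + (ε + ε) := by rw [hs]; ring
      _ = s + (r - s) := by rw [hε, ENNReal.add_halves]
      _ = r := add_tsub_cancel_of_le hsr.le
  · intro U hU r hr
    set s := μ U + ν U with hs
    have hsr : r < s := hr
    have hst : s ≠ ∞ := by
      simp [hs, ENNReal.add_eq_top, measure_ne_top]
    set ε := (s - r) / 2 with hε
    have hε0 : ε ≠ 0 := by
      have : 0 < s - r := tsub_pos_iff_lt.2 hsr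
      simp [hε, ENNReal.div_eq_zero_iff, this.ne', hst]
    have hεt : ε ≠ ∞ := by
      have h1 : s - r ≠ ∞ := (lt_of_le_of_lt tsub_le_self hst.lt_top).ne
      simp only [hε]
      exact (ENNReal.div_lt_top h1 (by norm_num)).ne
    obtain ⟨K₁, hK₁U, hK₁c, hK₁⟩ :=
      hμ.innerRegular.exists_subset_lt_add isCompact_empty hU (measure_ne_top μ U) hε0
    obtain ⟨K₂, hK₂U, hK₂c, hK₂⟩ :=
      hν.innerRegular.exists_subset_lt_add isCompact_empty hU (measure_ne_top ν U) hε0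
    refine ⟨K₁ ∪ K₂, union_subset hK₁U hK₂U, hK₁c.union hK₂c, ?_⟩
    have key : s < (μ + ν) (K₁ ∪ K₂) + (ε + ε) := by
      calc s = μ U + ν U := hs
        _ < (μ K₁ + ε) + (ν K₂ + ε) := ENNReal.add_lt_add hK₁ hK₂
        _ = (μ K₁ + ν K₂) + (ε + ε) := by ring
        _ ≤ (μ (K₁ ∪ K₂) + ν (K₁ ∪ K₂)) + (ε + ε) := by
            have h1 : μ K₁ ≤ μ (K₁ ∪ K₂) := measure_mono subset_union_left
            have h2 : ν K₂ ≤ ν (K₁ ∪ K₂) := measure_mono subset_union_right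
            exact add_le_add (add_le_add h1 h2) le_rfl
        _ = (μ + ν) (K₁ ∪ K₂) + (ε + ε) := rfl
    have hr2 : r + (ε + ε) ≤ s := by
      have h2 : ε + ε = s - r := by rw [hε, ENNReal.add_halves]
      rw [h2, add_tsub_cancel_of_le hsr.le]
    have := lt_of_le_of_lt hr2 key
    exact (ENNReal.add_lt_add_iff_right (by simp [ENNReal.add_eq_top, hεt] : ε + ε ≠ ∞)).1 this

end helpers

section bary
variable {E : Type*} [AddCommGroup E] [Module ℝ E] [TopologicalSpace E]
    [IsTopologicalAddGroup E] [ContinuousSMul ℝ E] [T2Space E]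
    [MeasurableSpace E] [BorelSpace E]


lemma affine_separates {x y : E} [LocallyConvexSpace ℝ E]
    (h : ∀ f : E →ᵃ[ℝ] ℝ, Continuous f → f x = f y) : x = y := by
  by_contra hne
  obtain ⟨ℓ, hℓ⟩ := geometric_hahn_banach_point_point hne
  have := h ℓ.toLinearMap.toAffineMap ℓ.continuous
  simp only [LinearMap.coe_toAffineMap, ContinuousLinearMap.coe_coe] at this
  rw [this] at hℓ
  exact lt_irrefl _ hℓ

lemma exists_barycenter (K : Set E) (hK : IsCompact K) (hKc : Convex ℝ K)
    (ν : Measure K) [IsProbabilityMeasure ν] :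
    ∃ b ∈ K, ∀ f : E →ᵃ[ℝ] ℝ, Continuous f → f b = ∫ x : K, f (x : E) ∂ν := by
  haveI : CompactSpace K := isCompact_iff_compactSpace.mp hK
  set ι := {f : E →ᵃ[ℝ] ℝ // Continuous f} with hι
  set S : ι → Set E := fun f => {x | f.1 x = ∫ x : K, f.1 (x : E) ∂ν} with hS
  have hSclosed : ∀ f : ι, IsClosed (S f) := fun f => isClosed_eq f.2 continuous_const
  have key : ∀ u : Finset ι, (K ∩ ⋂ f ∈ u, S f).Nonempty := by
    intro u
    set F : E →ᵃ[ℝ] (u → ℝ) := AffineMap.pi (fun g => (g : ι).1) with hF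
    have hFc : Continuous F := continuous_pi (fun g => (g : ι).2)
    have hint : Integrable (fun x : K => F (x : E)) ν := by
      apply (hFc.comp continuous_subtype_val).integrable_of_hasCompactSupport
      exact (isClosed_tsupport _).isCompact
    have hmem : (∫ x : K, F (x : E) ∂ν) ∈ F '' K := by
      apply (hKc.affine_image F).integral_mem ((hK.image hFc).isClosed)
      · exact Filter.Eventually.of_forall (fun x => mem_image_of_mem _ x.2)
      · exact hint
    obtain ⟨x, hxK, hx⟩ := hmem
    refine ⟨x, hxK, ?_⟩
    simp only [mem_iInter]
    intro f hf
    have hproj : ∀ g : u, (∫ x : K, F (x : E) ∂ν) g = ∫ x : K, (g : ι).1 (x : E) ∂ν := by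
      intro g
      have := (ContinuousLinearMap.proj (R := ℝ) (φ := fun _ : u => ℝ) g).integral_comp_comm hint
      simpa [hF, AffineMap.pi_apply] using this.symm
    have := congrFun hx ⟨f, hf⟩
    have hFx : F x ⟨f, hf⟩ = f.1 x := by simp [hF, AffineMap.pi_apply]
    rw [hFx] at this
    rw [hS]
    simpa [hproj ⟨f, hf⟩] using this
  obtain ⟨b, hbK, hb⟩ := hK.inter_iInter_nonempty S hSclosed
    (by intro u; simpa using key u)
  refine ⟨b, hbK, fun f hf => ?_⟩
  exact mem_iInter.mp hb ⟨f, hf⟩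

end bary

/-- A point `ω` of a compact convex set `K` is extreme if and only if the Dirac
measure `δ_ω` is the only Radon probability measure on `K` with barycenter `ω`. -/
theorem extremePoint_iff_dirac_unique_barycentric_measure
    {E : Type*} [AddCommGroup E] [Module ℝ E] [TopologicalSpace E]
    [IsTopologicalAddGroup E] [ContinuousSMul ℝ E] [LocallyConvexSpace ℝ E]
    [T2Space E] [MeasurableSpace E] [BorelSpace E]
    (K : Set E) (hK : IsCompact K) (hKc : Convex ℝ K)
    (ω : E) (hω : ω ∈ K) :
    ω ∈ Set.extremePoints ℝ K ↔
      ∀ μ : Measure K, IsProbabilityMeasure μ → μ.Regular →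
        (∀ f : E →ᵃ[ℝ] ℝ, Continuous f → f ω = ∫ x : K, f (x : E) ∂μ) →
        μ = Measure.dirac (⟨ω, hω⟩ : K) := by
  haveI : CompactSpace K := isCompact_iff_compactSpace.mp hK
  set p : K := ⟨ω, hω⟩ with hp
  have hintf : ∀ (f : E →ᵃ[ℝ] ℝ), Continuous f → ∀ (m : Measure K), IsFiniteMeasure m →
      Integrable (fun x : K => f (x : E)) m := by
    intro f hf m hm
    exact (hf.comp continuous_subtype_val).integrable_of_hasCompactSupport
      ((isClosed_tsupport _).isCompact)
  constructor
  · -- hard direction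
    intro hext μ hprob hreg hbary
    haveI := hprob
    by_contra hne
    have h1lt : μ {p} < 1 := by
      rcases lt_or_ge (μ {p}) 1 with h | h
      · exact h
      exfalso; apply hne
      have h1 : μ {p} = 1 := le_antisymm prob_le_one h
      have hcompl : μ {p}ᶜ = 0 := by
        rw [measure_compl isClosed_singleton.measurableSet (measure_ne_top μ _), h1,
          measure_univ, tsub_self]
      ext s hs
      rw [Measure.dirac_apply' _ hs]
      by_cases hps : p ∈ s
      · have h3 : (1 : ℝ≥0∞) ≤ μ s := h1 ▸ measure_mono (singleton_subset_iff.2 hps)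
        simp [indicator_of_mem hps, le_antisymm prob_le_one h3]
      · have h4 : μ s ≤ μ {p}ᶜ := measure_mono (subset_compl_singleton_iff.mpr hps)
        simp [indicator_of_notMem hps, le_antisymm (hcompl ▸ h4) zero_le]
    have hcpos : 0 < μ {p}ᶜ := by
      rw [measure_compl isClosed_singleton.measurableSet (measure_ne_top μ _), measure_univ]
      exact tsub_pos_iff_lt.2 h1lt
    obtain ⟨C, hCsub, hCcomp, hCpos⟩ :=
      hreg.innerRegular isClosed_singleton.isOpen_compl 0 hcpos
    set C' : Set E := Subtype.val '' C with hC'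
    have hC'comp : IsCompact C' := hCcomp.image continuous_subtype_val
    have hωC' : ω ∉ C' := by
      rintro ⟨x, hxC, hx⟩
      exact (hCsub hxC) (by rwa [mem_singleton_iff, ← Subtype.coe_inj])
    have hsep : ∀ c ∈ C', ∃ ℓ : E →L[ℝ] ℝ, ℓ ω < ℓ c := by
      intro c hc
      exact geometric_hahn_banach_point_point (fun h => hωC' (h ▸ hc))
    choose! L hL using hsep
    set V : E → Set E := fun c => {x | (L c ω + L c c) / 2 < L c x} with hV
    have hVopen : ∀ c, IsOpen (V c) := fun c =>
      isOpen_lt continuous_const (L c).continuous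
    have hcover : C' ⊆ ⋃ c ∈ C', V c := by
      intro x hx
      have := hL x hx
      exact mem_biUnion hx (by simp only [hV, mem_setOf_eq]; linarith)
    obtain ⟨t, htsub, htfin, htcov⟩ :=
      hC'comp.elim_finite_subcover_image (fun c _ => hVopen c) hcover
    have hle : μ C ≤ μ (⋃ c ∈ t, Subtype.val ⁻¹' V c) := by
      apply measure_mono
      intro x hx
      obtain ⟨c, hct, hxc⟩ := mem_iUnion₂.1 (htcov (mem_image_of_mem _ hx))
      exact mem_iUnion₂.2 ⟨c, hct, hxc⟩
    have hex : ∃ c ∈ t, μ (Subtype.val ⁻¹' V c) ≠ 0 := by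
      by_contra hno
      push_neg at hno
      have h0 : μ (⋃ c ∈ t, Subtype.val ⁻¹' V c) = 0 :=
        (measure_biUnion_null_iff htfin.countable).2 hno
      rw [h0] at hle
      exact hCpos.ne' (le_antisymm hle zero_le ▸ rfl)
    obtain ⟨c, hct, hcpos'⟩ := hex
    set ℓ : E →L[ℝ] ℝ := L c with hℓ
    set r : ℝ := (ℓ ω + ℓ c) / 2 with hr
    have hrω : ℓ ω < r := by
      have := hL c (htsub hct)
      rw [hr]; linarith
    set A : Set K := {x : K | r ≤ ℓ (x : E)} with hA
    have hAmeas : MeasurableSet A :=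
      (isClosed_le continuous_const (ℓ.continuous.comp continuous_subtype_val)).measurableSet
    have hApos : 0 < μ A := by
      refine lt_of_lt_of_le (lt_of_le_of_ne zero_le (Ne.symm hcpos')) (measure_mono ?_)
      intro x hx
      have hx' : (ℓ ω + ℓ c) / 2 < ℓ (x : E) := hx
      show r ≤ ℓ (x : E)
      rw [hr]
      exact hx'.le
    set ℓa : E →ᵃ[ℝ] ℝ := ℓ.toLinearMap.toAffineMap with hℓa
    have hℓac : Continuous ℓa := ℓ.continuous
    have hAne1 : μ Aᶜ ≠ 0 := by
      intro h0
      have hae : ∀ᵐ x ∂μ, x ∈ A := by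
        rw [ae_iff]
        exact h0
      have hge : r ≤ ∫ x : K, ℓ (x : E) ∂μ := by
        have h1 : ∫ _ : K, r ∂μ = r := by simp
        rw [← h1]
        refine integral_mono_ae (integrable_const r) ?_ ?_
        · exact hintf ℓa hℓac μ inferInstance
        · filter_upwards [hae] with x hx using hx
      have hba := hbary ℓa hℓac
      simp only [hℓa, LinearMap.coe_toAffineMap, ContinuousLinearMap.coe_coe] at hba
      rw [← hba] at hge
      linarith
    have hAne : μ A ≠ 0 := hApos.ne'
    set ν₁ : Measure K := (μ A)⁻¹ • μ.restrict A with hν₁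
    set ν₂ : Measure K := (μ Aᶜ)⁻¹ • μ.restrict Aᶜ with hν₂
    haveI hp1 : IsProbabilityMeasure ν₁ := by
      constructor
      rw [hν₁, Measure.smul_apply, Measure.restrict_apply_univ, smul_eq_mul]
      exact ENNReal.inv_mul_cancel hAne (measure_ne_top μ A)
    haveI hp2 : IsProbabilityMeasure ν₂ := by
      constructor
      rw [hν₂, Measure.smul_apply, Measure.restrict_apply_univ, smul_eq_mul]
      exact ENNReal.inv_mul_cancel hAne1 (measure_ne_top μ Aᶜ)
    obtain ⟨b₁, hb₁K, hb₁⟩ := exists_barycenter K hK hKc ν₁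
    obtain ⟨b₂, hb₂K, hb₂⟩ := exists_barycenter K hK hKc ν₂
    set s1 : ℝ := (μ A).toReal with hs1
    set s2 : ℝ := (μ Aᶜ).toReal with hs2
    have hs1pos : 0 < s1 := ENNReal.toReal_pos hAne (measure_ne_top μ A)
    have hs2pos : 0 < s2 := ENNReal.toReal_pos hAne1 (measure_ne_top μ Aᶜ)
    have hsum : s1 + s2 = 1 := by
      rw [hs1, hs2, ← ENNReal.toReal_add (measure_ne_top μ A) (measure_ne_top μ Aᶜ),
        measure_add_measure_compl hAmeas, measure_univ, ENNReal.toReal_one]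
    have hcombo : ∀ f : E →ᵃ[ℝ] ℝ, Continuous f → f ω = s1 * f b₁ + s2 * f b₂ := by
      intro f hf
      have hint : Integrable (fun x : K => f (x : E)) μ := hintf f hf μ inferInstance
      have e1 : f b₁ = s1⁻¹ * ∫ x in A, f (x : E) ∂μ := by
        rw [hb₁ f hf, hν₁, integral_smul_measure, ENNReal.toReal_inv, smul_eq_mul, hs1]
      have e2 : f b₂ = s2⁻¹ * ∫ x in Aᶜ, f (x : E) ∂μ := by
        rw [hb₂ f hf, hν₂, integral_smul_measure, ENNReal.toReal_inv, smul_eq_mul, hs2]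
      rw [hbary f hf, ← integral_add_compl hAmeas hint, e1, e2]
      field_simp
    have hωcombo : ω = s1 • b₁ + s2 • b₂ := by
      apply affine_separates
      intro f hf
      rw [hcombo f hf, Convex.combo_affine_apply hsum]
      simp [smul_eq_mul]
    have hseg : ω ∈ openSegment ℝ b₁ b₂ := ⟨s1, s2, hs1pos, hs2pos, hsum, hωcombo.symm⟩
    obtain ⟨hb1ω, _⟩ := (mem_extremePoints.1 hext).2 b₁ hb₁K b₂ hb₂K hseg
    have hrb1 : r ≤ ℓ b₁ := by
      have hbℓ := hb₁ ℓa hℓac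
      simp only [hℓa, LinearMap.coe_toAffineMap, ContinuousLinearMap.coe_coe] at hbℓ
      rw [hbℓ]
      have h0 : ∀ᵐ x ∂(μ.restrict A), x ∈ A := ae_restrict_mem hAmeas
      have hae : ∀ᵐ x : K ∂ν₁, r ≤ ℓ (x : E) := by
        have h1 : ∀ᵐ x ∂ν₁, x ∈ A := Measure.ae_smul_measure h0 _
        filter_upwards [h1] with x hx using hx
      have h1 : ∫ _ : K, r ∂ν₁ = r := by simp
      rw [← h1]
      exact integral_mono_ae (integrable_const r) (hintf ℓa hℓac ν₁ inferInstance) hae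
    rw [hb1ω] at hrb1
    linarith
  · -- easy direction
    intro h
    refine ⟨hω, fun x₁ h₁ x₂ h₂ hseg => ?_⟩
    obtain ⟨a, b, ha, hb, hab, hcombo⟩ := hseg
    set p₁ : K := ⟨x₁, h₁⟩ with hp₁
    set p₂ : K := ⟨x₂, h₂⟩ with hp₂
    set μ : Measure K := ENNReal.ofReal a • Measure.dirac p₁ +
      ENNReal.ofReal b • Measure.dirac p₂ with hμ
    haveI hf1 : IsFiniteMeasure (ENNReal.ofReal a • Measure.dirac p₁) := by
      constructor
      rw [Measure.smul_apply, measure_univ, smul_eq_mul, mul_one]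
      exact ENNReal.ofReal_lt_top
    haveI hf2 : IsFiniteMeasure (ENNReal.ofReal b • Measure.dirac p₂) := by
      constructor
      rw [Measure.smul_apply, measure_univ, smul_eq_mul, mul_one]
      exact ENNReal.ofReal_lt_top
    haveI hprob : IsProbabilityMeasure μ := by
      constructor
      rw [hμ, Measure.add_apply, Measure.smul_apply, Measure.smul_apply, measure_univ,
        measure_univ, smul_eq_mul, smul_eq_mul, mul_one, mul_one,
        ← ENNReal.ofReal_add ha.le hb.le, hab, ENNReal.ofReal_one]
    have hregμ : μ.Regular := by
      haveI := dirac_regular p₁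
      haveI := dirac_regular p₂
      exact regular_add (Measure.Regular.smul ENNReal.ofReal_ne_top)
        (Measure.Regular.smul ENNReal.ofReal_ne_top)
    have hbary : ∀ f : E →ᵃ[ℝ] ℝ, Continuous f → f ω = ∫ x : K, f (x : E) ∂μ := by
      intro f hf
      have hc : Continuous fun x : K => f (x : E) := hf.comp continuous_subtype_val
      have hsm : StronglyMeasurable fun x : K => f (x : E) := hc.stronglyMeasurable
      rw [hμ, integral_add_measure (hintf f hf _ hf1) (hintf f hf _ hf2),
        integral_smul_measure, integral_smul_measure, integral_dirac' _ _ hsm,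
        integral_dirac' _ _ hsm, ENNReal.toReal_ofReal ha.le, ENNReal.toReal_ofReal hb.le]
      rw [← hcombo, Convex.combo_affine_apply hab]
      try simp [hp₁, hp₂, smul_eq_mul]
    have hμd := h μ hprob hregμ hbary
    have keyfun : ∀ (q : K), ENNReal.ofReal a * Measure.dirac p₁ ({q} : Set K) +
        ENNReal.ofReal b * Measure.dirac p₂ ({q} : Set K) ≠ 0 →
        q = (⟨ω, hω⟩ : K) := by
      intro q hq
      by_contra hqe
      have h2 : μ ({q} : Set K) = 0 := by
        rw [hμd, Measure.dirac_apply' _ isClosed_singleton.measurableSet,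
          indicator_of_notMem (by simpa [mem_singleton_iff, eq_comm] using hqe)]
      apply hq
      rw [← h2, hμ, Measure.add_apply, Measure.smul_apply, Measure.smul_apply,
        smul_eq_mul, smul_eq_mul]
    have hx₁ : p₁ = (⟨ω, hω⟩ : K) := by
      apply keyfun p₁
      rw [Measure.dirac_apply_of_mem (mem_singleton p₁), mul_one]
      intro h0
      have := le_self_add.trans_eq h0
      exact (ENNReal.ofReal_pos.2 ha).ne' (le_antisymm this zero_le)
    have hx₂ : p₂ = (⟨ω, hω⟩ : K) := by
      apply keyfun p₂
      rw [Measure.dirac_apply_of_mem (mem_singleton p₂), mul_one]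
      intro h0
      have : ENNReal.ofReal b ≤ 0 := le_add_self.trans_eq h0
      exact (ENNReal.ofReal_pos.2 hb).ne' (le_antisymm this zero_le)
    exact congrArg Subtype.val hx₁
end

section
/- Let 𝔄₁, 𝔄₂ be unital C*-algebras and ω a state on the (minimal) tensor product 𝔄₁ ⊗ 𝔄₂. If the restriction of ω to 𝔄₁ ⊗ 𝟙 is a pure state, then ω factorizes: ω(AB) = ω(A)ω(B) for all A ∈ 𝔄₁⊗𝟙 and B ∈ 𝟙⊗𝔄₂. -/
open scoped ComplexOrder

/-- If the restriction of a state `ω` on `𝔄₁ ⊗ 𝔄₂` to the subalgebra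
`𝔄₁ ⊗ 𝟙` is pure, then `ω` factorizes: `ω(AB) = ω(A)ω(B)` for `A ∈ 𝔄₁ ⊗ 𝟙`
and `B ∈ 𝟙 ⊗ 𝔄₂`.  Here the tensor product is formalized abstractly: `𝔄₁` and
`𝔄₂` are commuting unital star subalgebras of a unital C*-algebra `𝔄`
(the images of `𝔄₁ ⊗ 𝟙` and `𝟙 ⊗ 𝔄₂` in `𝔄₁ ⊗ 𝔄₂`). -/
theorem pure_restriction_implies_factorization
    {𝔄 : Type*} [NormedRing 𝔄] [StarRing 𝔄] [CStarRing 𝔄] [NormOneClass 𝔄]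
    [NormedAlgebra ℂ 𝔄] [StarModule ℂ 𝔄] [CompleteSpace 𝔄]
    (𝔄₁ 𝔄₂ : StarSubalgebra ℂ 𝔄)
    (hcomm : ∀ a ∈ 𝔄₁, ∀ b ∈ 𝔄₂, a * b = b * a)
    (ω : 𝔄 →ₗ[ℂ] ℂ)
    (hω1 : ω 1 = 1) (hωpos : ∀ a : 𝔄, 0 ≤ ω (star a * a))
    -- the restriction of `ω` to `𝔄₁` is a pure state: every positive linear
    -- functional on `𝔄₁` majorized by it is a multiple `λ·ω|_{𝔄₁}`, `λ ∈ [0,1]`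
    (hpure : ∀ ψ : 𝔄₁ →ₗ[ℂ] ℂ,
      (∀ a : 𝔄₁, 0 ≤ ψ (star a * a)) →
      (∀ a : 𝔄₁, 0 ≤ ω (star (a : 𝔄) * (a : 𝔄)) - ψ (star a * a)) →
      ∃ l : ℝ, 0 ≤ l ∧ l ≤ 1 ∧ ∀ a : 𝔄₁, ψ a = l * ω (a : 𝔄)) :
    ∀ a ∈ 𝔄₁, ∀ b ∈ 𝔄₂, ω (a * b) = ω a * ω b := by
  letI : CStarAlgebra 𝔄 := { }
  letI := CStarAlgebra.spectralOrder 𝔄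
  letI := CStarAlgebra.spectralOrderedRing 𝔄
  have hω_mono : ∀ x : 𝔄, 0 ≤ x → 0 ≤ ω x := by
    intro x hx
    rw [StarOrderedRing.nonneg_iff] at hx
    induction hx using AddSubmonoid.closure_induction with
    | mem y hy => obtain ⟨s, rfl⟩ := hy; exact hωpos s
    | zero => simp
    | add u v _ _ hu hv => rw [map_add]; exact add_nonneg hu hv
  have hRsmul : ∀ x ∈ 𝔄₂, ∀ t : ℝ, t • x ∈ 𝔄₂ := by
    intro x hx t
    rw [← algebraMap_smul ℂ t x]
    exact SMulMemClass.smul_mem _ hx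
  intro a ha b hb
  -- Step 1: factorization for `star d * d`, `d ∈ 𝔄₂`, `‖d‖ ≤ 1`.
  have core : ∀ d ∈ 𝔄₂, ‖d‖ ≤ 1 → ω (a * (star d * d)) = ω a * ω (star d * d) := by
    intro d hd hd1
    set e : 𝔄 := star d * d with he
    have heM : e ∈ 𝔄₂ := mul_mem (star_mem hd) hd
    have he0 : (0 : 𝔄) ≤ e := star_mul_self_nonneg d
    have he1 : e ≤ 1 := by
      rw [← CStarAlgebra.norm_le_one_iff_of_nonneg e he0, he,
        CStarRing.norm_star_mul_self]
      nlinarith [norm_nonneg d]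
    let ψ : 𝔄₁ →ₗ[ℂ] ℂ :=
      { toFun := fun x => ω ((x : 𝔄) * e)
        map_add' := fun x y => by simp [add_mul]
        map_smul' := fun c x => by simp [smul_mul_assoc] }
    have hψ : ∀ x : 𝔄₁, ψ x = ω ((x : 𝔄) * e) := fun _ => rfl
    have hrearr : ∀ x : 𝔄₁, ((star x * x : 𝔄₁) : 𝔄) * e = star (x : 𝔄) * e * (x : 𝔄) := by
      intro x
      have hco : ((star x * x : 𝔄₁) : 𝔄) = star (x : 𝔄) * (x : 𝔄) := rfl
      rw [hco, mul_assoc, hcomm (x : 𝔄) x.2 e heM, ← mul_assoc]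
    have hψpos : ∀ x : 𝔄₁, 0 ≤ ψ (star x * x) := by
      intro x
      rw [hψ, hrearr]
      exact hω_mono _ (star_left_conjugate_nonneg he0 _)
    have hψle : ∀ x : 𝔄₁, 0 ≤ ω (star (x : 𝔄) * (x : 𝔄)) - ψ (star x * x) := by
      intro x
      rw [hψ, hrearr, ← map_sub]
      have hx : star (x : 𝔄) * (x : 𝔄) - star (x : 𝔄) * e * (x : 𝔄)
          = star (x : 𝔄) * (1 - e) * (x : 𝔄) := by noncomm_ring
      rw [hx]
      exact hω_mono _ (star_left_conjugate_nonneg (sub_nonneg.mpr he1) _)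
    obtain ⟨l, -, -, hl⟩ := hpure ψ hψpos hψle
    have h1 : (l : ℂ) = ω e := by
      have := hl 1
      rw [hψ 1] at this
      simpa [hω1] using this.symm
    have h2 := hl ⟨a, ha⟩
    rw [hψ] at h2
    simp only at h2
    rw [h2, h1]
    ring
  -- Step 2: remove the normalization.
  have hωmul : ∀ d ∈ 𝔄₂, ω (a * (star d * d)) = ω a * ω (star d * d) := by
    intro d hd
    set r : ℝ := ‖d‖ + 1 with hr
    have hr0 : 0 < r := by positivity
    set d' : 𝔄 := ((r⁻¹ : ℝ) : ℂ) • d with hd'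
    have hd'M : d' ∈ 𝔄₂ := SMulMemClass.smul_mem _ hd
    have hnorm : ‖d'‖ ≤ 1 := by
      rw [hd', norm_smul, Complex.norm_real, Real.norm_eq_abs,
        abs_of_pos (inv_pos.mpr hr0), inv_mul_le_iff₀ hr0, mul_one, hr]
      linarith
    have key := core d' hd'M hnorm
    have hone : ((r : ℂ) ^ 2) * (((r⁻¹ : ℝ) : ℂ) * ((r⁻¹ : ℝ) : ℂ)) = 1 := by
      have hne : (r : ℂ) ≠ 0 := by exact_mod_cast hr0.ne'
      push_cast
      field_simp
    have hsd : star d * d = ((r : ℂ) ^ 2) • (star d' * d') := by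
      rw [hd', star_smul, Complex.star_def, Complex.conj_ofReal,
        smul_mul_smul_comm, smul_smul, hone, one_smul]
    rw [hsd, mul_smul_comm, map_smul, map_smul, key, smul_eq_mul, smul_eq_mul]
    ring
  -- Step 3: factorization for selfadjoint elements of 𝔄₂.
  have hPsa : ∀ c ∈ 𝔄₂, IsSelfAdjoint c → ω (a * c) = ω a * ω c := by
    intro c hc hcsa
    have h1mem : (1 : 𝔄) ∈ 𝔄₂ := one_mem _
    have h1 := hωmul (1 + c) (add_mem h1mem hc)
    have h2 := hωmul (1 - c) (sub_mem h1mem hc)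
    have e1 : star (1 + c) * (1 + c) = 1 + c + c + c * c := by
      rw [star_add, star_one, hcsa.star_eq]; noncomm_ring
    have e2 : star (1 - c) * (1 - c) = 1 - c - c + c * c := by
      rw [star_sub, star_one, hcsa.star_eq]; noncomm_ring
    rw [e1] at h1
    rw [e2] at h2
    simp only [mul_add, mul_sub, mul_one, map_add, map_sub, hω1] at h1 h2
    linear_combination (h1 - h2) / 4
  -- Step 4: general b via real and imaginary parts.
  have hc1M : ((realPart b : 𝔄)) ∈ 𝔄₂ := by
    rw [realPart_apply_coe]
    exact hRsmul _ (add_mem hb (star_mem hb)) _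
  have hc2M : ((imaginaryPart b : 𝔄)) ∈ 𝔄₂ := by
    rw [imaginaryPart_apply_coe]
    exact SMulMemClass.smul_mem _ (hRsmul _ (sub_mem hb (star_mem hb)) _)
  have hP1 := hPsa _ hc1M (realPart b).2
  have hP2 := hPsa _ hc2M (imaginaryPart b).2
  have hb2 : ω b = ω (realPart b : 𝔄) + Complex.I * ω (imaginaryPart b : 𝔄) := by
    conv_lhs => rw [← realPart_add_I_smul_imaginaryPart b]
    rw [map_add, map_smul, smul_eq_mul]
  have hab : ω (a * b)
      = ω (a * (realPart b : 𝔄)) + Complex.I * ω (a * (imaginaryPart b : 𝔄)) := by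
    conv_lhs => rw [← realPart_add_I_smul_imaginaryPart b]
    rw [mul_add, mul_smul_comm, map_add, map_smul, smul_eq_mul]
  rw [hab, hP1, hP2, hb2]
  ring
end

section
/- The entanglement of formation is convex: for states ω₁, ω₂ on a unital C*-algebra 𝔄 = 𝔄₁⊗𝔄₂ and λ₁,λ₂ ≥ 0 with λ₁+λ₂ = 1, one has E(λ₁ω₁ + λ₂ω₂) ≤ λ₁E(ω₁) + λ₂E(ω₂). The key lemma is: λ₁M_{ω₁}(𝔖) + λ₂M_{ω₂}(𝔖) ⊆ M_{λ₁ω₁+λ₂ω₂}(𝔖), where M_ω(𝔖) is the set of probability Radon measures on the state space 𝔖 with barycenter ω. -/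
open MeasureTheory
open scoped ComplexOrder

section

variable {𝔄 : Type*} [NormedRing 𝔄] [StarRing 𝔄] [NormedAlgebra ℂ 𝔄] [StarModule ℂ 𝔄]

/-- The state space of a unital normed star algebra: positive linear
functionals `φ` with `φ(1) = 1`, in the weak* topology. -/
def stateSpace (𝔄 : Type*) [NormedRing 𝔄] [StarRing 𝔄] [NormedAlgebra ℂ 𝔄] :
    Set (WeakDual ℂ 𝔄) :=
  {φ | φ 1 = 1 ∧ ∀ a : 𝔄, 0 ≤ φ (star a * a)}

/-- Restriction of a functional on `𝔄` to a star subalgebra `𝔄₁ ⊆ 𝔄`. -/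
noncomputable def restrictFunctional (𝔄₁ : StarSubalgebra ℂ 𝔄)
    (φ : WeakDual ℂ 𝔄) : WeakDual ℂ 𝔄₁ :=
  ContinuousLinearMap.comp (φ : 𝔄 →L[ℂ] ℂ)
    ⟨𝔄₁.subtype.toAlgHom.toLinearMap, continuous_subtype_val⟩

/-- `μ` is a probability measure on the state space with barycenter `ω`. -/
def hasBarycenter [MeasurableSpace (WeakDual ℂ 𝔄)]
    (μ : Measure (stateSpace 𝔄)) (ω : WeakDual ℂ 𝔄) : Prop :=
  IsProbabilityMeasure μ ∧
    ∀ a : 𝔄, ∫ φ : stateSpace 𝔄, (φ : WeakDual ℂ 𝔄) a ∂μ = ω a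

/-- Entanglement of formation associated with a concave function `𝔽` on the
states of the subalgebra `𝔄₁`: `E(ω) = inf { ∫ 𝔽(rφ) dμ(φ) : μ ∈ M_ω(𝔖) }`. -/
noncomputable def EoF [MeasurableSpace (WeakDual ℂ 𝔄)]
    (𝔄₁ : StarSubalgebra ℂ 𝔄) (𝔽 : WeakDual ℂ 𝔄₁ → ℝ)
    (ω : WeakDual ℂ 𝔄) : ℝ :=
  sInf {r : ℝ | ∃ μ : Measure (stateSpace 𝔄), hasBarycenter μ ω ∧
    r = ∫ φ : stateSpace 𝔄, 𝔽 (restrictFunctional 𝔄₁ (φ : WeakDual ℂ 𝔄)) ∂μ}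

end

section AuxLemmas

variable {𝔄 : Type*} [NormedRing 𝔄] [StarRing 𝔄] [CStarRing 𝔄] [NormOneClass 𝔄]
    [NormedAlgebra ℂ 𝔄] [StarModule ℂ 𝔄] [CompleteSpace 𝔄]

/-- A positive unital functional is bounded on self-adjoint elements. -/
lemma aux_state_sa_bound (φ : WeakDual ℂ 𝔄) (hφ : φ ∈ stateSpace 𝔄)
    (b : 𝔄) (hb : IsSelfAdjoint b) : ‖φ b‖ ≤ ‖b‖ := by
  obtain ⟨h1, hpos⟩ := hφ
  letI : CStarAlgebra 𝔄 := ⟨⟩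
  letI : PartialOrder 𝔄 := CStarAlgebra.spectralOrder 𝔄
  letI : StarOrderedRing 𝔄 := CStarAlgebra.spectralOrderedRing 𝔄
  have key : ∀ x : 𝔄, 0 ≤ x → 0 ≤ φ x := by
    intro x hx
    rw [StarOrderedRing.nonneg_iff] at hx
    induction hx using AddSubmonoid.closure_induction with
    | mem y hy => obtain ⟨s, rfl⟩ := hy; exact hpos s
    | zero => simp
    | add y z _ _ hy hz => rw [map_add]; exact add_nonneg hy hz
  have hmap : ∀ r : ℝ, φ (algebraMap ℝ 𝔄 r) = r := by
    intro r
    rw [IsScalarTower.algebraMap_apply ℝ ℂ 𝔄, Algebra.algebraMap_eq_smul_one,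
      _root_.map_smul, h1, smul_eq_mul, mul_one, Complex.coe_algebraMap]
  have h1' : 0 ≤ φ (algebraMap ℝ 𝔄 ‖b‖ - b) := by
    refine key _ ?_
    rw [sub_nonneg]
    exact hb.le_algebraMap_norm_self
  have h2' : 0 ≤ φ (b - (-(algebraMap ℝ 𝔄 ‖b‖))) := by
    refine key _ ?_
    rw [sub_nonneg]
    exact hb.neg_algebraMap_norm_le_self
  rw [map_sub, hmap] at h1'
  rw [map_sub, map_neg, hmap] at h2'
  rw [Complex.le_def] at h1' h2'
  simp only [Complex.sub_re, Complex.sub_im, Complex.zero_re, Complex.zero_im,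
    Complex.ofReal_re, Complex.ofReal_im, Complex.neg_re, Complex.neg_im,
    ] at h1' h2'
  have him : (φ b).im = 0 := by linarith [h1'.2, h2'.2]
  have : φ b = ((φ b).re : ℂ) := Complex.ext rfl (by simp [him])
  rw [this, Complex.norm_real, Real.norm_eq_abs, abs_le]
  constructor <;> [linarith [h2'.1]; linarith [h1'.1]]

/-- A positive unital functional has norm at most `2`. -/
lemma aux_state_bound (φ : WeakDual ℂ 𝔄) (hφ : φ ∈ stateSpace 𝔄) (a : 𝔄) :
    ‖φ a‖ ≤ 2 * ‖a‖ := by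
  have hsa : ∀ b : 𝔄, IsSelfAdjoint b → ‖φ b‖ ≤ ‖b‖ := aux_state_sa_bound φ hφ
  have main : ∀ b c : 𝔄, IsSelfAdjoint b → IsSelfAdjoint c → a = b + Complex.I • c →
      ‖b‖ ≤ ‖a‖ → ‖c‖ ≤ ‖a‖ → ‖φ a‖ ≤ 2 * ‖a‖ := by
    intro b c hb hc hab hnb hnc
    calc ‖φ a‖ = ‖φ b + Complex.I * φ c‖ := by
          rw [hab, map_add, _root_.map_smul, smul_eq_mul]
      _ ≤ ‖φ b‖ + ‖Complex.I * φ c‖ := norm_add_le _ _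
      _ ≤ ‖b‖ + ‖c‖ := by
          rw [norm_mul, Complex.norm_I, one_mul]; exact add_le_add (hsa b hb) (hsa c hc)
      _ ≤ 2 * ‖a‖ := by linarith
  refine main (((1:ℂ)/2) • (a + star a)) ((-(Complex.I)/2) • (a - star a)) ?_ ?_ ?_ ?_ ?_
  · rw [IsSelfAdjoint, star_smul, star_add, star_star, add_comm]
    norm_num
  · rw [IsSelfAdjoint, star_smul, star_sub, star_star]
    rw [show star (-Complex.I/2) = -(-Complex.I/2) by simp [Complex.ext_iff]; norm_num]
    rw [neg_smul, ← smul_neg, neg_sub]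
  · rw [smul_smul]
    rw [show Complex.I * (-Complex.I/2) = (1:ℂ)/2 by
      rw [← mul_div_assoc, mul_neg, Complex.I_mul_I, neg_neg]]
    rw [← smul_add]
    rw [show a + star a + (a - star a) = (2:ℂ) • a by
      rw [two_smul]; abel]
    rw [smul_smul]
    norm_num
  · calc ‖((1:ℂ)/2) • (a + star a)‖ ≤ ‖(1:ℂ)/2‖ * ‖a + star a‖ := norm_smul_le _ _
      _ ≤ (1/2) * (‖a‖ + ‖star a‖) := by
          gcongr
          · simp
          · exact norm_add_le _ _
      _ = ‖a‖ := by rw [norm_star]; ring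
  · calc ‖(-(Complex.I)/2) • (a - star a)‖ ≤ ‖-(Complex.I)/2‖ * ‖a - star a‖ := norm_smul_le _ _
      _ ≤ (1/2) * (‖a‖ + ‖star a‖) := by
          gcongr
          · simp
          · exact norm_sub_le _ _
      _ = ‖a‖ := by rw [norm_star]; ring

lemma aux_stateSpace_isClosed : IsClosed (stateSpace 𝔄) := by
  have h1 : IsClosed {φ : WeakDual ℂ 𝔄 | φ 1 = 1} :=
    isClosed_eq (WeakDual.eval_continuous 1) continuous_const
  have h2 : IsClosed {φ : WeakDual ℂ 𝔄 | ∀ a : 𝔄, 0 ≤ φ (star a * a)} := by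
    have : {φ : WeakDual ℂ 𝔄 | ∀ a : 𝔄, 0 ≤ φ (star a * a)} =
        ⋂ a : 𝔄, {φ : WeakDual ℂ 𝔄 | 0 ≤ φ (star a * a)} := by
      ext φ; simp
    rw [this]
    refine isClosed_iInter fun a => ?_
    have : {φ : WeakDual ℂ 𝔄 | 0 ≤ φ (star a * a)} =
        (fun φ : WeakDual ℂ 𝔄 => φ (star a * a)) ⁻¹' {z : ℂ | 0 ≤ z} := rfl
    rw [this]
    refine IsClosed.preimage (WeakDual.eval_continuous _) ?_
    have : {z : ℂ | 0 ≤ z} = Complex.re ⁻¹' (Set.Ici 0) ∩ Complex.im ⁻¹' {0} := by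
      ext z
      simp [Complex.le_def, eq_comm]
    rw [this]
    exact (isClosed_Ici.preimage Complex.continuous_re).inter
      (isClosed_singleton.preimage Complex.continuous_im)
  exact (Set.setOf_and ▸ h1.inter h2 :)

lemma aux_stateSpace_isCompact : IsCompact (stateSpace 𝔄) := by
  refine IsCompact.of_isClosed_subset
    (WeakDual.isCompact_closedBall (0 : StrongDual ℂ 𝔄) 2) aux_stateSpace_isClosed ?_
  intro φ hφ
  simp only [Set.mem_preimage, Metric.mem_closedBall, dist_zero_right]
  exact ContinuousLinearMap.opNorm_le_bound _ (by norm_num) (aux_state_bound φ hφ)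

lemma aux_restrict_continuous (𝔄₁ : StarSubalgebra ℂ 𝔄) :
    Continuous (restrictFunctional 𝔄₁ : WeakDual ℂ 𝔄 → WeakDual ℂ 𝔄₁) := by
  refine WeakDual.continuous_of_continuous_eval fun y => ?_
  exact WeakDual.eval_continuous (y : 𝔄)

variable [MeasurableSpace (WeakDual ℂ 𝔄)] [BorelSpace (WeakDual ℂ 𝔄)]

lemma aux_integrable_eval (μ : Measure (stateSpace 𝔄)) [IsFiniteMeasure μ] (a : 𝔄) :
    Integrable (fun φ : stateSpace 𝔄 => (φ : WeakDual ℂ 𝔄) a) μ := by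
  have hmeas : Measurable (fun φ : stateSpace 𝔄 => (φ : WeakDual ℂ 𝔄) a) :=
    ((WeakDual.eval_continuous a).comp continuous_subtype_val).measurable
  refine ⟨hmeas.aestronglyMeasurable, ?_⟩
  refine HasFiniteIntegral.of_bounded (C := 2 * ‖a‖) (ae_of_all _ fun φ => ?_)
  exact aux_state_bound (φ : WeakDual ℂ 𝔄) φ.2 a

lemma aux_integrable_F (𝔄₁ : StarSubalgebra ℂ 𝔄) (𝔽 : WeakDual ℂ 𝔄₁ → ℝ)
    (h𝔽cont : Continuous 𝔽) (μ : Measure (stateSpace 𝔄)) [IsFiniteMeasure μ] :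
    Integrable (fun φ : stateSpace 𝔄 =>
      𝔽 (restrictFunctional 𝔄₁ (φ : WeakDual ℂ 𝔄))) μ := by
  obtain ⟨C, hC⟩ := aux_stateSpace_isCompact.exists_bound_of_continuousOn
    ((h𝔽cont.comp (aux_restrict_continuous 𝔄₁)).continuousOn)
  have hmeas : Measurable (fun φ : stateSpace 𝔄 =>
      𝔽 (restrictFunctional 𝔄₁ (φ : WeakDual ℂ 𝔄))) :=
    (((h𝔽cont.comp (aux_restrict_continuous 𝔄₁))).comp continuous_subtype_val).measurable
  refine ⟨hmeas.aestronglyMeasurable, ?_⟩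
  exact HasFiniteIntegral.of_bounded (C := C) (ae_of_all _ fun φ => hC _ φ.2)

lemma aux_dirac_barycenter (ω : WeakDual ℂ 𝔄) (hω : ω ∈ stateSpace 𝔄) :
    hasBarycenter (Measure.dirac (⟨ω, hω⟩ : stateSpace 𝔄)) ω := by
  refine ⟨Measure.dirac.isProbabilityMeasure, fun a => ?_⟩
  rw [integral_dirac]

end AuxLemmas

/-- If `c ≤ l * x` for all `x ∈ S`, `S` nonempty and bounded below, `0 ≤ l`,
then `c ≤ l * sInf S`. -/
lemma aux_le_mul_csInf {S : Set ℝ} (hne : S.Nonempty) (hbd : BddBelow S) {l c : ℝ}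
    (hl : 0 ≤ l) (h : ∀ x ∈ S, c ≤ l * x) : c ≤ l * sInf S := by
  rcases eq_or_lt_of_le hl with rfl | hl'
  · obtain ⟨x, hx⟩ := hne
    simpa using h x hx
  · have : c / l ≤ sInf S := le_csInf hne fun x hx => (div_le_iff₀' hl').mpr (h x hx)
    exact (div_le_iff₀' hl').mp this


/-- Convexity of the entanglement of formation
`E(λ₁ω₁ + λ₂ω₂) ≤ λ₁E(ω₁) + λ₂E(ω₂)`, together with the key lemma
`λ₁·M_{ω₁}(𝔖) + λ₂·M_{ω₂}(𝔖) ⊆ M_{λ₁ω₁+λ₂ω₂}(𝔖)` for measures with fixed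
barycenters on the state space of a unital C*-algebra `𝔄 = 𝔄₁ ⊗ 𝔄₂` (here
`𝔄₁` is realized as a unital star subalgebra of `𝔄`, and `r` is the
restriction map to `𝔄₁`). -/
theorem eof_convex
    {𝔄 : Type*} [NormedRing 𝔄] [StarRing 𝔄] [CStarRing 𝔄] [NormOneClass 𝔄]
    [NormedAlgebra ℂ 𝔄] [StarModule ℂ 𝔄] [CompleteSpace 𝔄]
    [MeasurableSpace (WeakDual ℂ 𝔄)] [BorelSpace (WeakDual ℂ 𝔄)]
    (𝔄₁ : StarSubalgebra ℂ 𝔄)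
    (𝔽 : WeakDual ℂ 𝔄₁ → ℝ) (h𝔽cont : Continuous 𝔽)
    (h𝔽nonneg : ∀ ψ, 0 ≤ 𝔽 ψ)
    (h𝔽concave : ConcaveOn ℝ (stateSpace 𝔄₁) 𝔽)
    (ω₁ ω₂ : WeakDual ℂ 𝔄) (hω₁ : ω₁ ∈ stateSpace 𝔄) (hω₂ : ω₂ ∈ stateSpace 𝔄)
    (l₁ l₂ : ℝ) (hl₁ : 0 ≤ l₁) (hl₂ : 0 ≤ l₂) (hl : l₁ + l₂ = 1) :
    (∀ μ₁ μ₂ : Measure (stateSpace 𝔄), hasBarycenter μ₁ ω₁ → hasBarycenter μ₂ ω₂ →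
      hasBarycenter (ENNReal.ofReal l₁ • μ₁ + ENNReal.ofReal l₂ • μ₂)
        (l₁ • ω₁ + l₂ • ω₂)) ∧
    EoF 𝔄₁ 𝔽 (l₁ • ω₁ + l₂ • ω₂) ≤ l₁ * EoF 𝔄₁ 𝔽 ω₁ + l₂ * EoF 𝔄₁ 𝔽 ω₂ := by
  have keyLemma : ∀ μ₁ μ₂ : Measure (stateSpace 𝔄), hasBarycenter μ₁ ω₁ →
      hasBarycenter μ₂ ω₂ →
      hasBarycenter (ENNReal.ofReal l₁ • μ₁ + ENNReal.ofReal l₂ • μ₂)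
        (l₁ • ω₁ + l₂ • ω₂) := by
    intro μ₁ μ₂ h₁ h₂
    haveI := h₁.1
    haveI := h₂.1
    constructor
    · constructor
      simp only [Measure.add_apply, Measure.smul_apply, measure_univ, smul_eq_mul, mul_one]
      rw [← ENNReal.ofReal_add hl₁ hl₂, hl, ENNReal.ofReal_one]
    · intro a
      have i₁ := aux_integrable_eval μ₁ a
      have i₂ := aux_integrable_eval μ₂ a
      rw [integral_add_measure (i₁.smul_measure ENNReal.ofReal_ne_top)
          (i₂.smul_measure ENNReal.ofReal_ne_top),
        integral_smul_measure, integral_smul_measure,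
        ENNReal.toReal_ofReal hl₁, ENNReal.toReal_ofReal hl₂, h₁.2 a, h₂.2 a]
      have hs : ∀ (l : ℝ) (ω : WeakDual ℂ 𝔄), (l • ω) a = l • (ω a) := fun _ _ => rfl
      show _ = (l₁ • ω₁) a + (l₂ • ω₂) a
      rw [hs, hs, Complex.real_smul, Complex.real_smul]
  refine ⟨keyLemma, ?_⟩
  set S : WeakDual ℂ 𝔄 → Set ℝ := fun ω =>
    {r : ℝ | ∃ μ : Measure (stateSpace 𝔄), hasBarycenter μ ω ∧
      r = ∫ φ : stateSpace 𝔄, 𝔽 (restrictFunctional 𝔄₁ (φ : WeakDual ℂ 𝔄)) ∂μ} with hS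
  have hSdef : ∀ ω, EoF 𝔄₁ 𝔽 ω = sInf (S ω) := fun ω => rfl
  have hbdd : ∀ ω, BddBelow (S ω) := by
    intro ω
    refine ⟨0, fun r hr => ?_⟩
    obtain ⟨μ, hμ, rfl⟩ := hr
    exact integral_nonneg fun φ => h𝔽nonneg _
  have hne₁ : (S ω₁).Nonempty :=
    ⟨_, Measure.dirac _, aux_dirac_barycenter ω₁ hω₁, rfl⟩
  have hne₂ : (S ω₂).Nonempty :=
    ⟨_, Measure.dirac _, aux_dirac_barycenter ω₂ hω₂, rfl⟩
  have hmix : ∀ r₁ ∈ S ω₁, ∀ r₂ ∈ S ω₂, l₁ * r₁ + l₂ * r₂ ∈ S (l₁ • ω₁ + l₂ • ω₂) := by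
    rintro r₁ ⟨μ₁, h₁, rfl⟩ r₂ ⟨μ₂, h₂, rfl⟩
    haveI := h₁.1
    haveI := h₂.1
    refine ⟨ENNReal.ofReal l₁ • μ₁ + ENNReal.ofReal l₂ • μ₂, keyLemma μ₁ μ₂ h₁ h₂, ?_⟩
    have i₁ := aux_integrable_F 𝔄₁ 𝔽 h𝔽cont μ₁
    have i₂ := aux_integrable_F 𝔄₁ 𝔽 h𝔽cont μ₂
    rw [integral_add_measure (i₁.smul_measure ENNReal.ofReal_ne_top)
        (i₂.smul_measure ENNReal.ofReal_ne_top),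
      integral_smul_measure, integral_smul_measure,
      ENNReal.toReal_ofReal hl₁, ENNReal.toReal_ofReal hl₂, smul_eq_mul, smul_eq_mul]
  have hkey : ∀ r₁ ∈ S ω₁, ∀ r₂ ∈ S ω₂,
      EoF 𝔄₁ 𝔽 (l₁ • ω₁ + l₂ • ω₂) ≤ l₁ * r₁ + l₂ * r₂ := by
    intro r₁ h₁ r₂ h₂
    rw [hSdef]
    exact csInf_le (hbdd _) (hmix r₁ h₁ r₂ h₂)
  have step1 : ∀ r₁ ∈ S ω₁,
      EoF 𝔄₁ 𝔽 (l₁ • ω₁ + l₂ • ω₂) - l₁ * r₁ ≤ l₂ * sInf (S ω₂) := by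
    intro r₁ h₁
    refine aux_le_mul_csInf hne₂ (hbdd _) hl₂ fun r₂ h₂ => ?_
    linarith [hkey r₁ h₁ r₂ h₂]
  have step2 : EoF 𝔄₁ 𝔽 (l₁ • ω₁ + l₂ • ω₂) - l₂ * sInf (S ω₂) ≤ l₁ * sInf (S ω₁) := by
    refine aux_le_mul_csInf hne₁ (hbdd _) hl₁ fun r₁ h₁ => ?_
    linarith [step1 r₁ h₁]
  rw [hSdef ω₁, hSdef ω₂]
  linarith [step2]
end
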